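/- Let M be a row-stochastic n×n matrix and u ⊊ {1,...,n}. If from every index i ∈ u there is a path i = i_0, i_1, ..., i_k with M_{i_{m} i_{m+1}} > 0 ending at some i_k ∉ u, then the substochastic matrix M_{uu} satisfies: M_{uu}^t → 0 as t → ∞. -/

import Mathlib

/-- If from every unlabeled state there is a positive-probability path to a
labeled state, then powers of the substochastic submatrix M_{uu} tend to zero. -/
theorem substochastic_pow_tendsto_zero {n : ℕ} (M : Matrix (Fin n) (Fin n) ℝ)
    (hnonneg : ∀ i j, 0 ≤ M i j) (hrow : ∀ i, ∑ j, M i j = 1)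
    (u : Finset (Fin n)) (hu : u ≠ Finset.univ)
    (hreach : ∀ i ∈ u, ∃ j, j ∉ u ∧ Relation.ReflTransGen (fun a b => 0 < M a b) i j) :
    Filter.Tendsto
      (fun t => (M.submatrix (fun i : {x // x ∈ u} => (i : Fin n))
        (fun j : {x // x ∈ u} => (j : Fin n))) ^ t)
      Filter.atTop (nhds 0) := by
  classical
  set A : Matrix {x // x ∈ u} {x // x ∈ u} ℝ :=
    M.submatrix (fun i : {x // x ∈ u} => (i : Fin n)) (fun j : {x // x ∈ u} => (j : Fin n))
    with hA
  by_cases hS : Nonempty {x // x ∈ u}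
  swap
  · haveI : IsEmpty {x // x ∈ u} := not_nonempty_iff.mp hS
    have h0 : ∀ t, A ^ t = 0 := fun t => Subsingleton.elim _ _
    simpa [h0] using tendsto_const_nhds (x := (0 : Matrix {x // x ∈ u} {x // x ∈ u} ℝ))
  -- nonnegativity of entries of powers
  have hAnn : ∀ i j, 0 ≤ A i j := fun i j => hnonneg _ _
  have hPnn : ∀ t i j, (0:ℝ) ≤ (A ^ t) i j := by
    intro t
    induction t with
    | zero => intro i j; simp [Matrix.one_apply]; positivity
    | succ t ih =>
      intro i j
      rw [pow_succ, Matrix.mul_apply]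
      exact Finset.sum_nonneg fun l _ => mul_nonneg (ih i l) (hAnn l j)
  -- row sums of powers
  set f : ℕ → {x // x ∈ u} → ℝ := fun t i => ∑ j, (A ^ t) i j with hf
  have hfnn : ∀ t i, 0 ≤ f t i := fun t i => Finset.sum_nonneg fun j _ => hPnn t i j
  have hf0 : ∀ i, f 0 i = 1 := by intro i; simp [hf, Matrix.one_apply]
  have hrowA : ∀ i, f 1 i ≤ 1 := by
    intro i
    have : f 1 i = ∑ j ∈ u, M (i : Fin n) j := by
      simp [hf, hA, Matrix.submatrix_apply]
      exact (Finset.sum_coe_sort u fun j => M (i : Fin n) j)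
    rw [this, ← hrow (i : Fin n)]
    exact Finset.sum_le_sum_of_subset_of_nonneg (Finset.subset_univ u)
      (fun j _ _ => hnonneg _ _)
  have hexp : ∀ s t i, f (s + t) i = ∑ l, (A ^ s) i l * f t l := by
    intro s t i
    simp only [hf, pow_add, Matrix.mul_apply]
    rw [Finset.sum_comm]
    simp [Finset.mul_sum]
  have hsucc : ∀ t i, f (t + 1) i ≤ f t i := by
    intro t i
    have := hexp t 1 i
    rw [this]
    calc ∑ l, (A ^ t) i l * f 1 l ≤ ∑ l, (A ^ t) i l * 1 :=
          Finset.sum_le_sum fun l _ =>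
            mul_le_mul_of_nonneg_left (hrowA l) (hPnn t i l)
      _ = f t i := by simp [hf]
  have hanti : ∀ i, Antitone fun t => f t i := fun i =>
    antitone_nat_of_succ_le fun t => hsucc t i
  have hf1 : ∀ t i, f t i ≤ 1 := fun t i => (hanti i (Nat.zero_le t)).trans (le_of_eq (hf0 i))
  -- key: every row eventually has sum < 1
  have key' : ∀ a b : Fin n, Relation.ReflTransGen (fun a b => 0 < M a b) a b → b ∉ u →
      ∀ ha : a ∈ u, ∃ t, f t ⟨a, ha⟩ < 1 := by
    intro a b hpath hb
    induction hpath using Relation.ReflTransGen.head_induction_on with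
    | refl => exact fun hb' => absurd hb' hb
    | @head a c hac hcb ih =>
      intro ha
      by_cases hc : c ∈ u
      · obtain ⟨t, ht⟩ := ih hc
        refine ⟨t + 1, ?_⟩
        have h1 : f (1 + t) ⟨a, ha⟩ = ∑ l, (A ^ 1) ⟨a, ha⟩ l * f t l := hexp 1 t ⟨a, ha⟩
        rw [Nat.add_comm t 1, h1]
        have hlt : ∑ l, (A ^ 1) ⟨a, ha⟩ l * f t l < ∑ l, (A ^ 1) ⟨a, ha⟩ l * 1 := by
          refine Finset.sum_lt_sum (fun l _ => mul_le_mul_of_nonneg_left (hf1 t l) (hPnn 1 _ l))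
            ⟨⟨c, hc⟩, Finset.mem_univ _, ?_⟩
          have hpos : 0 < (A ^ 1) ⟨a, ha⟩ ⟨c, hc⟩ := by
            simpa [hA, Matrix.submatrix_apply] using hac
          exact mul_lt_mul_of_pos_left ht hpos
        calc ∑ l, (A ^ 1) ⟨a, ha⟩ l * f t l < ∑ l, (A ^ 1) ⟨a, ha⟩ l * 1 := hlt
          _ = f 1 ⟨a, ha⟩ := by simp [hf]
          _ ≤ 1 := hrowA _
      · refine ⟨1, ?_⟩
        have heq : f 1 ⟨a, ha⟩ = ∑ j ∈ u, M a j := by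
          simp [hf, hA, Matrix.submatrix_apply]
          exact (Finset.sum_coe_sort u fun j => M a j)
        have hle : ∑ j ∈ Insert.insert c u, M a j ≤ 1 := by
          rw [← hrow a]
          exact Finset.sum_le_sum_of_subset_of_nonneg (Finset.subset_univ _)
            (fun j _ _ => hnonneg _ _)
        rw [Finset.sum_insert hc] at hle
        have : ∑ j ∈ u, M a j < 1 := by nlinarith [hac]
        rw [heq]; exact this
  have key : ∀ i : {x // x ∈ u}, ∃ t, f t i < 1 := by
    rintro ⟨a, ha⟩
    obtain ⟨b, hb, hpath⟩ := hreach a ha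
    exact key' a b hpath hb ha
  -- uniform time T with uniform bound c < 1
  choose tt htt using key
  set T : ℕ := Finset.univ.sup tt + 1 with hT
  have hTpos : 0 < T := Nat.succ_pos _
  have hfT : ∀ i, f T i < 1 := by
    intro i
    exact lt_of_le_of_lt (hanti i (Nat.le_succ_of_le (Finset.le_sup (Finset.mem_univ i)))) (htt i)
  have hne : (Finset.univ : Finset {x // x ∈ u}).Nonempty := Finset.univ_nonempty
  set c : ℝ := Finset.univ.sup' hne (fun i => f T i) with hc
  have hcT : ∀ i, f T i ≤ c := fun i => Finset.le_sup' _ (Finset.mem_univ i)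
  have hc1 : c < 1 := (Finset.sup'_lt_iff hne).mpr fun i _ => hfT i
  have hc0 : 0 ≤ c := le_trans (hfnn T hS.some) (hcT hS.some)
  -- geometric decay
  have hgeo : ∀ m i, f (T * m) i ≤ c ^ m := by
    intro m
    induction m with
    | zero => intro i; simpa using le_of_eq (hf0 i)
    | succ m ih =>
      intro i
      have : T * (m + 1) = T * m + T := by ring
      rw [this, hexp (T * m) T i]
      calc ∑ l, (A ^ (T * m)) i l * f T l
          ≤ ∑ l, (A ^ (T * m)) i l * c :=
            Finset.sum_le_sum fun l _ => mul_le_mul_of_nonneg_left (hcT l) (hPnn _ i l)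
        _ = f (T * m) i * c := by rw [← Finset.sum_mul]
        _ ≤ c ^ m * c := mul_le_mul_of_nonneg_right (ih i) hc0
        _ = c ^ (m + 1) := (pow_succ c m).symm
  have hbound : ∀ t i, f t i ≤ c ^ (t / T) := by
    intro t i
    exact le_trans (hanti i (Nat.mul_div_le t T)) (hgeo (t / T) i)
  -- conclude entrywise
  refine tendsto_pi_nhds.mpr fun i => ?_; rw [tendsto_pi_nhds]; intro j
  have hdiv : Filter.Tendsto (fun t : ℕ => t / T) Filter.atTop Filter.atTop := by
    apply Filter.tendsto_atTop_atTop.mpr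
    intro b
    exact ⟨b * T, fun t ht => (Nat.le_div_iff_mul_le hTpos).mpr ht⟩
  have hgc : Filter.Tendsto (fun t : ℕ => c ^ (t / T)) Filter.atTop (nhds 0) :=
    (tendsto_pow_atTop_nhds_zero_of_lt_one hc0 hc1).comp hdiv
  have h0 : Filter.Tendsto (fun t => (A ^ t) i j) Filter.atTop (nhds 0) := by
    apply squeeze_zero (fun t => hPnn t i j) (fun t => ?_) hgc
    calc (A ^ t) i j ≤ f t i :=
          Finset.single_le_sum (fun l _ => hPnn t i l) (Finset.mem_univ j)
      _ ≤ c ^ (t / T) := hbound t i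
  simpa using h0
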